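/- arXiv:2202.10597 — 2 statements merged into one kernel-verified Lean document; each statement's English description precedes it below -/
import Mathlib

section
/- Let D be a 2×2 matrix-valued function, analytic in each entry on ℂ*, satisfying D(qz) = κ^{σ₃} D(z) κ^{-σ₃} for all z ∈ ℂ*, where σ₃ = diag(1,-1) and κ ∈ ℂ* with κ² ∉ q^ℤ. Then D is constant and diagonal: the off-diagonal entries vanish identically and the diagonal entries are constant functions. -/
open Complex Filter Set Bornology Function Topology

/-- Reduction to the fundamental annulus. -/
lemma reduce_annulus (q : ℂ) (hq0 : 0 < ‖q‖) (hq1 : ‖q‖ < 1)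
    (z : ℂ) (hz : z ≠ 0) :
    ∃ n : ℤ, ‖q‖ < ‖q ^ n * z‖ ∧ ‖q ^ n * z‖ ≤ 1 := by
  have hq0' : q ≠ 0 := by intro h; simp [h] at hq0
  set L : ℝ := Real.log (‖q‖) with hL
  have hLneg : L < 0 := Real.log_neg hq0 hq1
  have hzpos : 0 < ‖z‖ := by simpa [norm_pos_iff] using hz
  set t : ℝ := Real.log (‖z‖) / L with ht
  refine ⟨⌈-t⌉, ?_⟩
  have hApos : 0 < ‖q ^ (⌈-t⌉ : ℤ) * z‖ := by
    have : q ^ (⌈-t⌉ : ℤ) ≠ 0 := zpow_ne_zero _ hq0'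
    exact norm_pos_iff.mpr (mul_ne_zero this hz)
  have hlogA : Real.log (‖q ^ (⌈-t⌉ : ℤ) * z‖)
      = (⌈-t⌉ : ℝ) * L + Real.log (‖z‖) := by
    rw [norm_mul, norm_zpow, Real.log_mul (by positivity) (ne_of_gt hzpos), Real.log_zpow]
  have h1 : (-t) ≤ (⌈-t⌉ : ℝ) := Int.le_ceil _
  have h2 : (⌈-t⌉ : ℝ) < -t + 1 := by
    have := Int.ceil_lt_add_one (-t)
    linarith
  have hLne : L ≠ 0 := ne_of_lt hLneg
  have htL : t * L = Real.log (‖z‖) := by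
    rw [ht, div_mul_cancel₀ _ hLne]
  constructor
  · -- abs q < A
    have : (⌈-t⌉ : ℝ) * L > (-t + 1) * L := by
      exact (mul_lt_mul_right_of_neg hLneg).mpr h2
    have hgt : Real.log (‖q ^ (⌈-t⌉ : ℤ) * z‖) > L := by
      rw [hlogA]; nlinarith
    calc ‖q‖ = Real.exp L := (Real.exp_log hq0).symm
      _ < Real.exp _ := Real.exp_lt_exp.mpr hgt
      _ = _ := Real.exp_log hApos
  · have : (⌈-t⌉ : ℝ) * L ≤ (-t) * L := by
      exact (mul_le_mul_right_of_neg hLneg).mpr h1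
    have hle : Real.log (‖q ^ (⌈-t⌉ : ℤ) * z‖) ≤ 0 := by
      rw [hlogA]; nlinarith
    calc ‖q ^ (⌈-t⌉ : ℤ) * z‖ = Real.exp _ := (Real.exp_log hApos).symm
      _ ≤ Real.exp 0 := Real.exp_le_exp.mpr hle
      _ = 1 := Real.exp_zero

/-- A function differentiable on `ℂ*` and bounded there is constant. -/
lemma const_of_bounded (f : ℂ → ℂ) (hd : DifferentiableOn ℂ f {z : ℂ | z ≠ 0})
    (M : ℝ) (hb : ∀ z : ℂ, z ≠ 0 → ‖f z‖ ≤ M) :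
    ∀ z : ℂ, z ≠ 0 → f z = f 1 := by
  set F : ℂ → ℂ := Function.update f 0 (limUnder (𝓝[≠] (0:ℂ)) f) with hF
  have hdF : DifferentiableOn ℂ F Set.univ := by
    apply Complex.differentiableOn_update_limUnder_of_bddAbove (univ_mem)
    · have : (Set.univ \ {(0:ℂ)}) = {z : ℂ | z ≠ 0} := by ext z; simp
      rw [this]; exact hd
    · refine ⟨M, ?_⟩
      rintro x ⟨z, ⟨-, hz⟩, rfl⟩
      exact hb z (by simpa using hz)
  have hdF' : Differentiable ℂ F := fun z => (hdF z (mem_univ z)).differentiableAt univ_mem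
  have hFeq : ∀ z : ℂ, z ≠ 0 → F z = f z := fun z hz => Function.update_of_ne hz _ _
  have hFb : ∀ z : ℂ, ‖F z‖ ≤ M := by
    intro z
    rcases eq_or_ne z 0 with rfl | hz
    · have hcont : ContinuousAt F 0 := hdF'.continuous.continuousAt
      have ht : Tendsto F (𝓝[≠] (0:ℂ)) (𝓝 (F 0)) :=
        hcont.continuousWithinAt.tendsto
      have ht' : Tendsto (fun z => ‖F z‖) (𝓝[≠] (0:ℂ)) (𝓝 (‖F 0‖)) :=
        (continuous_norm.continuousAt.tendsto.comp ht)
      refine le_of_tendsto ht' ?_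
      filter_upwards [self_mem_nhdsWithin] with z hz
      rw [hFeq z hz]; exact hb z hz
    · rw [hFeq z hz]; exact hb z hz
  have hconst : ∀ a b : ℂ, F a = F b := by
    intro a b
    apply hdF'.apply_eq_apply_of_bounded
    rw [isBounded_iff_forall_norm_le]
    exact ⟨M, by rintro x ⟨z, rfl⟩; exact hFb z⟩
  intro z hz
  rw [← hFeq z hz, ← hFeq 1 one_ne_zero, hconst z 1]

/-- The compact fundamental annulus and a bound there. -/
lemma annulus_bound (r : ℝ) (hr : 0 < r)
    (f : ℂ → ℂ) (hd : DifferentiableOn ℂ f {z : ℂ | z ≠ 0}) :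
    ∃ M : ℝ, ∀ w : ℂ, r ≤ ‖w‖ → ‖w‖ ≤ 1 →
      ‖f w‖ ≤ M := by
  set K : Set ℂ := {w : ℂ | r ≤ ‖w‖ ∧ ‖w‖ ≤ 1} with hK
  have hKsub : K ⊆ {z : ℂ | z ≠ 0} := by
    intro w hw
    intro h
    rw [mem_setOf_eq, h] at hw
    simp only [norm_zero] at hw
    linarith [hw.1, hr]
  have hKc : IsCompact K := by
    have hclosed : IsClosed K := by
      apply IsClosed.inter
      · exact isClosed_le continuous_const continuous_norm
      · exact isClosed_le continuous_norm continuous_const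
    have hbdd : IsBounded K := by
      apply (Metric.isBounded_closedBall (x := (0:ℂ)) (r := 1)).subset
      intro w hw
      simpa [Metric.mem_closedBall, Complex.dist_eq] using hw.2
    exact Metric.isCompact_of_isClosed_isBounded hclosed hbdd
  have hcont : ContinuousOn f K := (hd.continuousOn).mono hKsub
  rcases K.eq_empty_or_nonempty with hKe | hKne
  · exact ⟨0, fun w h1 h2 => absurd (show w ∈ K from ⟨h1, h2⟩) (by simp [hKe])⟩
  · obtain ⟨M, hM⟩ := hKc.exists_bound_of_continuousOn hcont
    exact ⟨M, fun w h1 h2 => hM w ⟨h1, h2⟩⟩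

/-- A `q`-periodic analytic function on `ℂ*` is constant. -/
lemma periodic_const (q : ℂ) (hq0 : 0 < ‖q‖) (hq1 : ‖q‖ < 1)
    (f : ℂ → ℂ) (hd : DifferentiableOn ℂ f {z : ℂ | z ≠ 0})
    (hper : ∀ z : ℂ, z ≠ 0 → f (q * z) = f z) :
    ∀ z : ℂ, z ≠ 0 → f z = f 1 := by
  have hq0' : q ≠ 0 := by intro h; simp [h] at hq0
  have hiter : ∀ n : ℤ, ∀ z : ℂ, z ≠ 0 → f (q ^ n * z) = f z := by
    intro n
    induction n using Int.induction_on with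
    | zero => intro z hz; simp
    | succ n ih =>
      intro z hz
      have h1 : (q : ℂ) ^ ((n : ℤ) + 1) * z = q * (q ^ (n : ℤ) * z) := by
        rw [zpow_add_one₀ hq0']; ring
      rw [h1, hper _ (mul_ne_zero (zpow_ne_zero _ hq0') hz), ih z hz]
    | pred n ih =>
      intro z hz
      have hz' : q ^ (-(n : ℤ) - 1) * z ≠ 0 := mul_ne_zero (zpow_ne_zero _ hq0') hz
      have h1 : q * (q ^ (-(n : ℤ) - 1) * z) = q ^ (-(n : ℤ)) * z := by
        rw [zpow_sub_one₀ hq0']; field_simp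
      have := hper _ hz'
      rw [h1] at this
      rw [← this, ih z hz]
  obtain ⟨M, hM⟩ := annulus_bound (‖q‖) hq0 f hd
  apply const_of_bounded f hd M
  intro z hz
  obtain ⟨n, hn1, hn2⟩ := reduce_annulus q hq0 hq1 z hz
  rw [← hiter n z hz]
  exact hM _ (le_of_lt hn1) hn2

/-- iterate a twist relation over `ℤ`. -/
lemma twist_iter (q c : ℂ) (hq0' : q ≠ 0) (hc0 : c ≠ 0) (f : ℂ → ℂ)
    (htw : ∀ z : ℂ, z ≠ 0 → f (q * z) = c * f z) :
    ∀ n : ℤ, ∀ z : ℂ, z ≠ 0 → f (q ^ n * z) = c ^ n * f z := by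
  intro n
  induction n using Int.induction_on with
  | zero => intro z hz; simp
  | succ n ih =>
    intro z hz
    have h1 : (q : ℂ) ^ ((n : ℤ) + 1) * z = q * (q ^ (n : ℤ) * z) := by
      rw [zpow_add_one₀ hq0']; ring
    rw [h1, htw _ (mul_ne_zero (zpow_ne_zero _ hq0') hz), ih z hz,
      zpow_add_one₀ hc0]; ring
  | pred n ih =>
    intro z hz
    have hz' : q ^ (-(n : ℤ) - 1) * z ≠ 0 := mul_ne_zero (zpow_ne_zero _ hq0') hz
    have h1 : q * (q ^ (-(n : ℤ) - 1) * z) = q ^ (-(n : ℤ)) * z := by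
      rw [zpow_sub_one₀ hq0']; field_simp
    have h2 := htw _ hz'
    rw [h1, ih z hz] at h2
    have h3 : f (q ^ (-(n : ℤ) - 1) * z) = c⁻¹ * (c ^ (-(n : ℤ)) * f z) := by
      rw [h2, inv_mul_cancel_left₀ hc0]
    rw [h3, zpow_sub_one₀ hc0]; ring

/-- Twisted functional equation with twist not a power of `q` forces vanishing. -/
lemma twist_zero (q c : ℂ) (hq0 : 0 < ‖q‖) (hq1 : ‖q‖ < 1)
    (hc0 : c ≠ 0) (hc : ∀ m : ℤ, c ≠ q ^ m)
    (f : ℂ → ℂ) (hd : DifferentiableOn ℂ f {z : ℂ | z ≠ 0})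
    (htw : ∀ z : ℂ, z ≠ 0 → f (q * z) = c * f z) :
    ∀ z : ℂ, z ≠ 0 → f z = 0 := by
  have hq0' : q ≠ 0 := by intro h; simp [h] at hq0
  set L : ℝ := Real.log (‖q‖) with hL
  have hLneg : L < 0 := Real.log_neg hq0 hq1
  have hcpos : 0 < ‖c‖ := norm_pos_iff.mpr hc0
  set r : ℝ := Real.log (‖c‖) / L with hr
  set m : ℤ := ⌊r⌋ with hm
  set c' : ℂ := c / q ^ m with hc'
  have hc'0 : c' ≠ 0 := div_ne_zero hc0 (zpow_ne_zero _ hq0')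
  have habsc' : ‖c'‖ = Real.exp ((r - m) * L) := by
    rw [hc', norm_div, norm_zpow]
    rw [show ‖c‖ = Real.exp (Real.log (‖c‖)) from (Real.exp_log hcpos).symm]
    rw [show ‖q‖ = Real.exp L from (Real.exp_log hq0).symm]
    have hpow : Real.exp L ^ (m : ℤ) = Real.exp ((m : ℝ) * L) := by
      rw [← Real.rpow_intCast, Real.rpow_def_of_pos (Real.exp_pos L), Real.log_exp, mul_comm]
    rw [hpow, ← Real.exp_sub]
    congr 1
    have : Real.log (‖c‖) = r * L := by
      rw [hr, div_mul_cancel₀ _ (ne_of_lt hLneg)]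
    rw [this]; ring
  have hrm1 : r - (m : ℝ) < 1 := by
    have := Int.lt_floor_add_one r; linarith
  have hrm0 : 0 ≤ r - (m : ℝ) := by
    have := Int.floor_le r; linarith
  have hc'le1 : ‖c'‖ ≤ 1 := by
    rw [habsc']
    calc Real.exp ((r - m) * L) ≤ Real.exp 0 := Real.exp_le_exp.mpr (by nlinarith)
      _ = 1 := Real.exp_zero
  have hc'gtq : ‖q‖ < ‖c'‖ := by
    rw [habsc']
    calc ‖q‖ = Real.exp L := (Real.exp_log hq0).symm
      _ < Real.exp ((r - m) * L) := Real.exp_lt_exp.mpr (by nlinarith)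
  have hc'1 : c' ≠ 1 := by
    intro h
    rw [hc', div_eq_one_iff_eq (zpow_ne_zero m hq0')] at h
    exact hc m h
  -- the function g
  set g : ℂ → ℂ := fun z => f z / z ^ m with hg
  have hgd : DifferentiableOn ℂ g {z : ℂ | z ≠ 0} := by
    apply DifferentiableOn.div hd
    · intro z hz
      exact ((differentiableAt_zpow.mpr (Or.inl hz)).differentiableWithinAt)
    · intro z hz
      exact zpow_ne_zero _ hz
  have hgtw : ∀ z : ℂ, z ≠ 0 → g (q * z) = c' * g z := by
    intro z hz
    have h1 := htw z hz
    simp only [hg, hc']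
    rw [h1, mul_zpow]
    field_simp
  have hgiter := twist_iter q c' hq0' hc'0 g hgtw
  obtain ⟨M, hM⟩ := annulus_bound (‖q‖) hq0 g hgd
  -- bound on punctured unit disk
  have hgb : ∀ z : ℂ, z ≠ 0 → ‖z‖ ≤ 1 → ‖g z‖ ≤ M := by
    intro z hz hz1
    obtain ⟨n, hn1, hn2⟩ := reduce_annulus q hq0 hq1 z hz
    have habs : ‖q ^ n * z‖ = ‖q‖ ^ n * ‖z‖ := by
      rw [norm_mul, norm_zpow]
    have hn0 : n ≤ 0 := by
      by_contra h
      push_neg at h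
      have h1 : ‖q‖ ^ (1:ℤ) < ‖q‖ ^ n := by
        rw [zpow_one]
        calc ‖q‖ < ‖q‖ ^ n * ‖z‖ := hn1.trans_eq habs
          _ ≤ ‖q‖ ^ n * 1 := by
              have : (0:ℝ) < ‖q‖ ^ n := zpow_pos hq0 n
              nlinarith
          _ = ‖q‖ ^ n := mul_one _
      have := (zpow_lt_zpow_iff_right_of_lt_one₀ hq0 hq1).mp h1
      omega
    have hw : q ^ n * z ≠ 0 := mul_ne_zero (zpow_ne_zero _ hq0') hz
    have key := hgiter n z hz
    have : g z = c' ^ (-n) * g (q ^ n * z) := by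
      rw [key]
      rw [zpow_neg]
      field_simp [zpow_ne_zero n hc'0]
    rw [this, norm_mul, norm_zpow]
    have h1 : ‖c'‖ ^ (-n) ≤ 1 := by
      have : ‖c'‖ ^ (-n) = ((‖c'‖)⁻¹) ^ n := by
        rw [inv_zpow, ← zpow_neg]
      rw [this]
      exact zpow_le_one_of_nonpos₀ ((one_le_inv₀ (norm_pos_iff.mpr hc'0)).mpr hc'le1) hn0
    have h2 : ‖g (q ^ n * z)‖ ≤ M := hM _ (le_of_lt hn1) hn2
    have h3 : 0 ≤ ‖g (q ^ n * z)‖ := norm_nonneg _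
    nlinarith [zpow_pos (norm_pos_iff.mpr hc'0) (-n)]
  -- extend g over 0 on the unit ball
  set G : ℂ → ℂ := Function.update g 0 (limUnder (𝓝[≠] (0:ℂ)) g) with hG
  have hdG : DifferentiableOn ℂ G (Metric.ball (0:ℂ) 1) := by
    apply Complex.differentiableOn_update_limUnder_of_bddAbove
      (Metric.ball_mem_nhds _ one_pos)
    · apply hgd.mono
      rintro z ⟨hz1, hz2⟩
      simpa using hz2
    · refine ⟨M, ?_⟩
      rintro x ⟨z, ⟨hz1, hz2⟩, rfl⟩
      exact hgb z (by simpa using hz2)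
        (le_of_lt (by simpa [Complex.dist_eq] using hz1))
  have hGat : DifferentiableAt ℂ G 0 :=
    hdG.differentiableAt (Metric.ball_mem_nhds _ one_pos)
  have hGc : ContinuousAt G 0 := hGat.continuousAt
  have hmul : Tendsto (fun z : ℂ => q * z) (𝓝[≠] (0:ℂ)) (𝓝 0) := by
    have hcont : Continuous (fun z : ℂ => q * z) := continuous_const.mul continuous_id
    have h := hcont.tendsto (0:ℂ)
    simp only [mul_zero] at h
    exact h.mono_left nhdsWithin_le_nhds
  have T1 : Tendsto (fun z => G (q * z)) (𝓝[≠] (0:ℂ)) (𝓝 (G 0)) :=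
    hGc.tendsto.comp hmul
  have T2 : Tendsto (fun z => c' * G z) (𝓝[≠] (0:ℂ)) (𝓝 (c' * G 0)) :=
    tendsto_const_nhds.mul (hGc.tendsto.mono_left nhdsWithin_le_nhds)
  have heq : ∀ᶠ z in 𝓝[≠] (0:ℂ), G (q * z) = c' * G z := by
    filter_upwards [self_mem_nhdsWithin,
      mem_nhdsWithin_of_mem_nhds (Metric.ball_mem_nhds (0:ℂ) one_pos)] with z hz1 hz2
    have hz : z ≠ (0:ℂ) := hz1
    have hqz : q * z ≠ 0 := mul_ne_zero hq0' hz
    rw [hG, Function.update_of_ne hqz, Function.update_of_ne hz]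
    exact hgtw z hz
  have hG0' : G 0 = c' * G 0 := tendsto_nhds_unique (T1.congr' heq) T2
  have hG0 : G 0 = 0 := by
    have h0 : (1 - c') * G 0 = 0 := by linear_combination hG0'
    rcases mul_eq_zero.mp h0 with h | h
    · exact absurd (sub_eq_zero.mp h).symm hc'1
    · exact h
  -- the function g₁
  set d : ℂ := deriv G 0 with hdd
  have hslope : Tendsto (slope G 0) (𝓝[≠] (0:ℂ)) (𝓝 d) :=
    hasDerivAt_iff_tendsto_slope.mp hGat.hasDerivAt
  set g₁ : ℂ → ℂ := fun z => g z / z with hg₁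
  have hslope_eq : ∀ᶠ z in 𝓝[≠] (0:ℂ), slope G 0 z = g₁ z := by
    filter_upwards [self_mem_nhdsWithin] with z hz1
    have hz : z ≠ (0:ℂ) := hz1
    rw [slope_def_field, hG0, sub_zero, sub_zero, hG, Function.update_of_ne hz]
  have hT : Tendsto g₁ (𝓝[≠] (0:ℂ)) (𝓝 d) := hslope.congr' hslope_eq
  have hnear : ∀ᶠ z in 𝓝[≠] (0:ℂ), ‖g₁ z‖ < ‖d‖ + 1 := by
    have habs : Tendsto (fun z => ‖g₁ z‖) (𝓝[≠] (0:ℂ))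
        (𝓝 (‖d‖)) := continuous_norm.continuousAt.tendsto.comp hT
    exact habs.eventually_lt_const (by linarith [norm_nonneg d])
  rw [eventually_nhdsWithin_iff, Metric.eventually_nhds_iff] at hnear
  obtain ⟨ε, hε, hball⟩ := hnear
  have hg₁d : DifferentiableOn ℂ g₁ {z : ℂ | z ≠ 0} :=
    hgd.div differentiableOn_id (fun z hz => hz)
  -- the twist of g₁
  set c'' : ℂ := c' / q with hc''
  have hc''0 : c'' ≠ 0 := div_ne_zero hc'0 hq0'
  have habsc'' : 1 < ‖c''‖ := by
    rw [hc'', norm_div]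
    exact (one_lt_div hq0).mpr hc'gtq
  have hc''1 : c'' ≠ 1 := by
    intro h
    rw [hc'', div_eq_one_iff_eq hq0'] at h
    have hcq : c = c' * q ^ m := by rw [hc', div_mul_cancel₀ _ (zpow_ne_zero m hq0')]
    exact hc (m + 1) (by rw [hcq, h, mul_comm, ← zpow_add_one₀ hq0'])
  have hg₁tw : ∀ z : ℂ, z ≠ 0 → g₁ (q * z) = c'' * g₁ z := by
    intro z hz
    simp only [hg₁, hc'']
    rw [hgtw z hz]
    field_simp
  have hg₁iter := twist_iter q c'' hq0' hc''0 g₁ hg₁tw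
  obtain ⟨M₁, hM₁⟩ := annulus_bound (‖q‖) hq0 g₁ hg₁d
  obtain ⟨M₂, hM₂⟩ := annulus_bound (ε/2) (by linarith) g₁ hg₁d
  -- outer bound
  have houter : ∀ z : ℂ, z ≠ 0 → 1 ≤ ‖z‖ → ‖g₁ z‖ ≤ M₁ := by
    intro z hz hz1
    obtain ⟨n, hn1, hn2⟩ := reduce_annulus q hq0 hq1 z hz
    have habs : ‖q ^ n * z‖ = ‖q‖ ^ n * ‖z‖ := by
      rw [norm_mul, norm_zpow]
    have hn0 : 0 ≤ n := by
      have h1 : ‖q‖ ^ n ≤ ‖q‖ ^ (0:ℤ) := by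
        rw [zpow_zero]
        calc ‖q‖ ^ n = ‖q‖ ^ n * 1 := (mul_one _).symm
          _ ≤ ‖q‖ ^ n * ‖z‖ := by
              have : (0:ℝ) < ‖q‖ ^ n := zpow_pos hq0 n
              nlinarith
          _ ≤ 1 := habs ▸ hn2
      exact (zpow_le_zpow_iff_right_of_lt_one₀ hq0 hq1).mp h1
    have key := hg₁iter n z hz
    have hrw : g₁ z = c'' ^ (-n) * g₁ (q ^ n * z) := by
      rw [key, zpow_neg]
      field_simp [zpow_ne_zero n hc''0]
    rw [hrw, norm_mul, norm_zpow]
    have h1 : ‖c''‖ ^ (-n) ≤ 1 :=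
      zpow_le_one_of_nonpos₀ (le_of_lt habsc'') (neg_nonpos.mpr hn0)
    have h2 : ‖g₁ (q ^ n * z)‖ ≤ M₁ := hM₁ _ (le_of_lt hn1) hn2
    have h3 : 0 ≤ ‖g₁ (q ^ n * z)‖ := norm_nonneg _
    nlinarith [zpow_pos (norm_pos_iff.mpr hc''0) (-n)]
  -- global bound
  set B : ℝ := max (max M₁ M₂) (‖d‖ + 1) with hB
  have hbB : ∀ z : ℂ, z ≠ 0 → ‖g₁ z‖ ≤ B := by
    intro z hz
    rcases le_or_gt 1 (‖z‖) with h | h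
    · exact (houter z hz h).trans ((le_max_left M₁ M₂).trans (le_max_left _ _))
    · rcases lt_or_ge (‖z‖) ε with h2 | h2
      · have := hball (by simpa [Complex.dist_eq] using h2) hz
        exact (le_of_lt this).trans (le_max_right _ _)
      · have := hM₂ z (by linarith) (le_of_lt h)
        exact this.trans ((le_max_right _ _).trans (le_max_left _ _))
  have hconst := const_of_bounded g₁ hg₁d B hbB
  have hone : g₁ 1 = 0 := by
    have h1 : g₁ q = c'' * g₁ 1 := by simpa using hg₁tw 1 one_ne_zero
    have h2 : g₁ q = g₁ 1 := hconst q hq0'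
    have h0 : (1 - c'') * g₁ 1 = 0 := by
      linear_combination h1 - h2
    rcases mul_eq_zero.mp h0 with h | h
    · exact absurd (sub_eq_zero.mp h).symm hc''1
    · exact h
  intro z hz
  have hz1 : g₁ z = 0 := by rw [hconst z hz, hone]
  have hgz : g z = 0 := by
    have : g z = g₁ z * z := by
      simp only [hg₁]; field_simp
    rw [this, hz1, zero_mul]
  have : f z = g z * z ^ m := by
    simp only [hg]; field_simp [zpow_ne_zero m hz]
  rw [this, hgz, zero_mul]

/-- A `2×2` matrix function analytic on `ℂ*` with
`D(qz) = κ^{σ₃} D(z) κ^{-σ₃}` and `κ² ∉ q^ℤ` is constant and diagonal. -/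
theorem matrix_twist_constant_diagonal (q κ : ℂ)
    (hq0 : 0 < ‖q‖) (hq1 : ‖q‖ < 1)
    (hκ : κ ≠ 0) (hres : ∀ m : ℤ, κ ^ 2 ≠ q ^ m)
    (D : ℂ → Matrix (Fin 2) (Fin 2) ℂ)
    (hA : ∀ i j, AnalyticOn ℂ (fun z => D z i j) {z : ℂ | z ≠ 0})
    (h11 : ∀ z : ℂ, z ≠ 0 → D (q * z) 0 0 = D z 0 0)
    (h22 : ∀ z : ℂ, z ≠ 0 → D (q * z) 1 1 = D z 1 1)
    (h12 : ∀ z : ℂ, z ≠ 0 → D (q * z) 0 1 = κ ^ 2 * D z 0 1)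
    (h21 : ∀ z : ℂ, z ≠ 0 → D (q * z) 1 0 = (κ ^ 2)⁻¹ * D z 1 0) :
    (∀ z : ℂ, z ≠ 0 → D z 0 1 = 0 ∧ D z 1 0 = 0) ∧
    ∃ d₁ d₂ : ℂ, ∀ z : ℂ, z ≠ 0 → D z 0 0 = d₁ ∧ D z 1 1 = d₂ := by
  have hdiff : ∀ i j, DifferentiableOn ℂ (fun z => D z i j) {z : ℂ | z ≠ 0} := by
    intro i j
    exact (hA i j).differentiableOn
  have hκ2 : κ ^ 2 ≠ 0 := pow_ne_zero 2 hκ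
  have hresinv : ∀ m : ℤ, (κ ^ 2)⁻¹ ≠ q ^ m := by
    intro m h
    apply hres (-m)
    rw [← inv_inv (κ ^ 2), h, ← zpow_neg]
  have t12 := twist_zero q (κ ^ 2) hq0 hq1 hκ2 hres _ (hdiff 0 1) h12
  have t21 := twist_zero q ((κ ^ 2)⁻¹) hq0 hq1 (inv_ne_zero hκ2) hresinv _ (hdiff 1 0) h21
  have p11 := periodic_const q hq0 hq1 _ (hdiff 0 0) h11
  have p22 := periodic_const q hq0 hq1 _ (hdiff 1 1) h22
  exact ⟨fun z hz => ⟨t12 z hz, t21 z hz⟩,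
    D 1 0 0, D 1 1 1, fun z hz => ⟨p11 z hz, p22 z hz⟩⟩
end

section
/- Any analytic function f on ℂ* satisfying f(qz) = f(z) for all z ∈ ℂ* (with 0 < |q| < 1) is constant. -/
/-- Any analytic function on `ℂ*` satisfying `f(qz) = f(z)` (with `0 < |q| < 1`)
is constant. -/
theorem q_periodic_constant (q : ℂ)
    (hq0 : 0 < ‖q‖) (hq1 : ‖q‖ < 1)
    (f : ℂ → ℂ) (hf : AnalyticOn ℂ f {z : ℂ | z ≠ 0})
    (hper : ∀ z : ℂ, z ≠ 0 → f (q * z) = f z) :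
    ∃ c : ℂ, ∀ z : ℂ, z ≠ 0 → f z = c := by
  have hqne : q ≠ 0 := by
    intro h; rw [h] at hq0; simp at hq0
  have hopen : IsOpen {z : ℂ | z ≠ 0} := isOpen_compl_singleton
  -- periodicity for all integer powers
  have hzper : ∀ n : ℤ, ∀ z : ℂ, z ≠ 0 → f (q ^ n * z) = f z := by
    intro n
    induction n using Int.induction_on with
    | zero => intro z hz; simp
    | succ k ih =>
      intro z hz
      have hz' : q ^ (k : ℤ) * z ≠ 0 := mul_ne_zero (zpow_ne_zero _ hqne) hz
      have := hper _ hz'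
      rw [← mul_assoc] at this
      rw [show q ^ ((k : ℤ) + 1) = q * q ^ (k : ℤ) by rw [zpow_add_one₀ hqne]; ring]
      rw [this, ih z hz]
    | pred k ih =>
      intro z hz
      have hz' : q ^ (-(k : ℤ) - 1) * z ≠ 0 := mul_ne_zero (zpow_ne_zero _ hqne) hz
      have key : q * q ^ (-(k : ℤ) - 1) = q ^ (-(k : ℤ)) := by
        have e : (-(k:ℤ)) = 1 + (-(k:ℤ) - 1) := by ring
        conv_rhs => rw [e, zpow_add₀ hqne, zpow_one]
      have := hper _ hz'
      rw [← mul_assoc, key] at this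
      rw [← this]; exact ih z hz
  -- bound on the compact annulus
  set K : Set ℂ := Metric.closedBall 0 1 \ Metric.ball 0 ‖q‖ with hK
  have hKsub : K ⊆ {z : ℂ | z ≠ 0} := by
    intro z hz h
    apply hz.2
    rw [h, Metric.mem_ball, dist_self]
    exact hq0
  have hKc : IsCompact K := (isCompact_closedBall 0 1).diff Metric.isOpen_ball
  have hcont : ContinuousOn f K :=
    (hf.continuousOn).mono hKsub
  obtain ⟨C, hC⟩ := hKc.exists_bound_of_continuousOn hcont
  -- every nonzero z can be moved into K
  have hmove : ∀ z : ℂ, z ≠ 0 → ∃ n : ℤ, q ^ n * z ∈ K := by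
    intro z hz
    set a := ‖q‖
    set r := ‖z‖ with hr
    have hr0 : 0 < r := by simpa [hr] using (norm_pos_iff.mpr hz)
    have hla : Real.log a < 0 := Real.log_neg hq0 hq1
    set n : ℤ := ⌈Real.log r / (-Real.log a)⌉ with hn
    refine ⟨n, ?_⟩
    have h1 : (Real.log r / (-Real.log a) : ℝ) ≤ n := Int.le_ceil _
    have h2 : (n : ℝ) < Real.log r / (-Real.log a) + 1 := Int.ceil_lt_add_one _
    have hpos : (0:ℝ) < -Real.log a := by linarith
    have hub : Real.log r ≤ (n : ℝ) * (-Real.log a) := by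
      rw [div_le_iff₀ hpos] at h1; linarith
    have hlb : (n : ℝ) * (-Real.log a) < Real.log r + (-Real.log a) := by
      have h3 := mul_lt_mul_of_pos_right h2 hpos
      have h4 : Real.log r / (-Real.log a) * (-Real.log a) = Real.log r :=
        div_mul_cancel₀ _ (ne_of_gt hpos)
      nlinarith
    -- so a ≤ a^n * r ≤ 1
    have habs : ‖q ^ n * z‖ = a ^ n * r := by
      rw [norm_mul, norm_zpow]
    have ha0 : (0:ℝ) < a := hq0
    have hanr0 : (0:ℝ) < a ^ n * r := mul_pos (zpow_pos ha0 _) hr0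
    have hlog : Real.log (a ^ n * r) = (n : ℝ) * Real.log a + Real.log r := by
      rw [Real.log_mul (ne_of_gt (zpow_pos ha0 _)) (ne_of_gt hr0), Real.log_zpow]
    have hle1 : a ^ n * r ≤ 1 := by
      have : Real.log (a ^ n * r) ≤ 0 := by rw [hlog]; nlinarith
      calc a ^ n * r = Real.exp (Real.log (a ^ n * r)) := (Real.exp_log hanr0).symm
        _ ≤ Real.exp 0 := Real.exp_le_exp.mpr this
        _ = 1 := Real.exp_zero
    have hgea : a ≤ a ^ n * r := by
      have hlg : Real.log a ≤ Real.log (a ^ n * r) := by rw [hlog]; nlinarith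
      calc a = Real.exp (Real.log a) := (Real.exp_log ha0).symm
        _ ≤ Real.exp (Real.log (a ^ n * r)) := Real.exp_le_exp.mpr hlg
        _ = a ^ n * r := Real.exp_log hanr0
    constructor
    · simpa [Metric.mem_closedBall, Complex.dist_eq, habs] using hle1
    · simp only [Metric.mem_ball, dist_zero_right, not_lt, habs]
      exact hgea
  -- f is bounded on ℂ*
  have hbound : ∀ z : ℂ, z ≠ 0 → ‖f z‖ ≤ C := by
    intro z hz
    obtain ⟨n, hn⟩ := hmove z hz
    have := hC _ hn
    rwa [hzper n z hz] at this
  -- g = f ∘ exp is entire and bounded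
  set g : ℂ → ℂ := fun w => f (Complex.exp w) with hg
  have hgdiff : Differentiable ℂ g := by
    intro w
    have hexp : Complex.exp w ≠ 0 := Complex.exp_ne_zero w
    have hfa : DifferentiableAt ℂ f (Complex.exp w) := by
      have hnhd := (hopen.analyticOn_iff_analyticOnNhd.mp hf) (Complex.exp w) hexp
      exact hnhd.differentiableAt
    exact hfa.comp w (Complex.differentiable_exp w)
  have hgb : Bornology.IsBounded (Set.range g) := by
    rw [isBounded_iff_forall_norm_le]
    refine ⟨C, ?_⟩
    rintro x ⟨w, rfl⟩
    exact hbound _ (Complex.exp_ne_zero w)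
  refine ⟨g 0, fun z hz => ?_⟩
  obtain ⟨w, hw⟩ : ∃ w, Complex.exp w = z := by
    have : z ∈ Set.range Complex.exp := by
      rw [Complex.range_exp]; exact hz
    exact this
  calc f z = g w := by rw [hg]; simp [hw]
    _ = g 0 := hgdiff.apply_eq_apply_of_bounded hgb w 0
end
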